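/- arXiv:2505.17588 — 3 statements merged into one kernel-verified Lean document; each statement's English description precedes it below -/
import Mathlib

section
/- The function V_ε is concave on ℝ: for every ε > 0, the piecewise function V_ε(x) = sqrt(x + (ε/2)^2) − ε/2 for x > 0 and V_ε(x) = x/ε for x ≤ 0 is a concave function of x. -/
noncomputable def Veps (ε x : ℝ) : ℝ :=
  if x > 0 then Real.sqrt (x + (ε / 2) ^ 2) - ε / 2 else x / ε

theorem veps_hasDeriv (ε : ℝ) (hε : 0 < ε) (x : ℝ) :
    HasDerivAt (Veps ε) (if x > 0 then 1 / (2 * Real.sqrt (x + (ε / 2) ^ 2)) else 1 / ε) x := by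
  have ha : (0:ℝ) < ε / 2 := by linarith
  have hsq : Real.sqrt ((ε / 2) ^ 2) = ε / 2 := Real.sqrt_sq ha.le
  have hg : ∀ y : ℝ, 0 ≤ y → HasDerivAt (fun z => Real.sqrt (z + (ε / 2) ^ 2) - ε / 2)
      (1 / (2 * Real.sqrt (y + (ε / 2) ^ 2))) y := by
    intro y hy
    have hne : y + (ε / 2) ^ 2 ≠ 0 := by positivity
    have h1 : HasDerivAt (fun z : ℝ => z + (ε / 2) ^ 2) 1 y := by
      simpa using (hasDerivAt_id y).add_const ((ε / 2) ^ 2)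
    have := (Real.hasDerivAt_sqrt hne).comp y h1
    simpa using this.sub_const (ε / 2)
  rcases lt_trichotomy x 0 with hx | hx | hx
  · rw [if_neg (by linarith)]
    have h1 : HasDerivAt (fun z : ℝ => z / ε) (1 / ε) x := by
      simpa using (hasDerivAt_id x).div_const ε
    refine h1.congr_of_eventuallyEq ?_
    filter_upwards [eventually_lt_nhds hx] with z hz
    simp [Veps, not_lt.mpr hz.le, le_of_lt hz, asymm hz]
  · subst hx
    rw [if_neg (lt_irrefl 0)]
    have key : 1 / ε = 1 / (2 * Real.sqrt (0 + (ε / 2) ^ 2)) := by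
      rw [zero_add, hsq]; ring
    have hR : HasDerivWithinAt (Veps ε) (1 / ε) (Set.Ici 0) 0 := by
      rw [key]
      refine ((hg 0 le_rfl).hasDerivWithinAt).congr ?_ ?_
      · intro z hz
        rcases eq_or_lt_of_le (Set.mem_Ici.mp hz : (0:ℝ) ≤ z) with h | h
        · simp [Veps, ← h, hsq]
        · simp [Veps, h]
      · simp [Veps, hsq]
    have hL : HasDerivWithinAt (Veps ε) (1 / ε) (Set.Iic 0) 0 := by
      have h1 : HasDerivAt (fun z : ℝ => z / ε) (1 / ε) 0 := by
        simpa using (hasDerivAt_id (0:ℝ)).div_const ε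
      refine h1.hasDerivWithinAt.congr ?_ ?_
      · intro z hz
        have hz' : z ≤ 0 := hz
        simp [Veps, not_lt.mpr hz']
      · simp [Veps]
    have := hL.union hR
    rwa [Set.Iic_union_Ici, hasDerivWithinAt_univ] at this
  · rw [if_pos hx]
    refine (hg x hx.le).congr_of_eventuallyEq ?_
    filter_upwards [eventually_gt_nhds hx] with z hz
    simp [Veps, hz]

theorem stmt_5 (ε : ℝ) (hε : 0 < ε) : ConcaveOn ℝ Set.univ (Veps ε) := by
  have ha : (0:ℝ) < ε / 2 := by linarith
  have hd := veps_hasDeriv ε hε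
  have hdiff : Differentiable ℝ (Veps ε) := fun x => (hd x).differentiableAt
  have hderiv : ∀ x, deriv (Veps ε) x =
      if x > 0 then 1 / (2 * Real.sqrt (x + (ε / 2) ^ 2)) else 1 / ε := fun x => (hd x).deriv
  refine Antitone.concaveOn_univ_of_deriv hdiff ?_
  intro x y hxy
  rw [hderiv x, hderiv y]
  have hsqpos : ∀ z : ℝ, 0 < z → ε / 2 ≤ Real.sqrt (z + (ε / 2) ^ 2) := by
    intro z hz
    have h := Real.sqrt_le_sqrt (show (ε/2)^2 ≤ z + (ε/2)^2 by linarith)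
    rwa [Real.sqrt_sq ha.le] at h
  by_cases hy : y > 0
  · rw [if_pos hy]
    by_cases hx : x > 0
    · rw [if_pos hx]
      apply one_div_le_one_div_of_le
      · positivity
      · have : Real.sqrt (x + (ε/2)^2) ≤ Real.sqrt (y + (ε/2)^2) :=
          Real.sqrt_le_sqrt (by linarith)
        linarith
    · rw [if_neg hx]
      have h1 : ε ≤ 2 * Real.sqrt (y + (ε/2)^2) := by
        have := hsqpos y hy; linarith
      exact one_div_le_one_div_of_le hε h1
  · rw [if_neg hy, if_neg (by intro h; exact hy (lt_of_lt_of_le h hxy))]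
end

section
/- Let (Ω, μ) be a finite measure space, p : Ω → ℝ measurable, and ε ∈ (0, 2]. Suppose ∫ p·V_ε(p) dμ ≤ C where V_ε(x) = sqrt(x + (ε/2)^2) − ε/2 for x > 0 and x/ε for x ≤ 0. Then ∫ |p|^(3/2) dμ ≤ μ(Ω) + (μ(Ω)·ε³)^(1/4)·C^(3/4) + C/(√2 − 1). -/
open MeasureTheory

lemma Veps_nonneg_mul (ε : ℝ) (hε : 0 < ε) (x : ℝ) : 0 ≤ x * Veps ε x := by
  unfold Veps
  split_ifs with h
  · have h1 : ε / 2 ≤ Real.sqrt (x + (ε / 2) ^ 2) :=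
      (Real.le_sqrt (by positivity) (by positivity)).mpr (by nlinarith)
    nlinarith
  · push_neg at h
    rw [mul_div_assoc']
    exact div_nonneg (mul_self_nonneg x) hε.le

lemma sqrt2_gt_one : (1:ℝ) < Real.sqrt 2 := by
  nlinarith [Real.sq_sqrt (by norm_num : (0:ℝ) ≤ 2), Real.sqrt_nonneg 2]

lemma case_big (ε x : ℝ) (hε : 0 < ε) (hε2 : ε ≤ 2) (hx : 1 < x) :
    (Real.sqrt 2 - 1) * (x ^ ((3:ℝ)/2)) ≤ x * (Real.sqrt (x + (ε/2)^2) - ε/2) := by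
  set a := ε / 2 with ha
  have ha0 : 0 < a := by positivity
  have ha1 : a ≤ 1 := by rw [ha]; linarith
  set s := Real.sqrt x with hs
  have hs1 : 1 ≤ s := by
    rw [hs, show (1:ℝ) = Real.sqrt 1 by simp]
    exact Real.sqrt_le_sqrt hx.le
  have hss : s ^ 2 = x := Real.sq_sqrt (by linarith)
  have hrpow : x ^ ((3:ℝ)/2) = x * s := by
    rw [show (3:ℝ)/2 = 1 + 1/2 by norm_num, Real.rpow_add (by linarith), Real.rpow_one,
      ← Real.sqrt_eq_rpow]
  rw [hrpow]
  set r := Real.sqrt 2 with hr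
  have hr2 : r ^ 2 = 2 := Real.sq_sqrt (by norm_num)
  have hr1 : 1 < r := sqrt2_gt_one
  have hmul : 0 ≤ (r - 1) * s * (s - a) :=
    mul_nonneg (mul_nonneg (by linarith) (by linarith)) (by linarith)
  have key : (r - 1) * s + a ≤ Real.sqrt (x + a ^ 2) := by
    rw [← Real.sqrt_sq (by nlinarith : (0:ℝ) ≤ (r-1)*s + a)]
    apply Real.sqrt_le_sqrt
    nlinarith
  nlinarith [Real.sqrt_nonneg (x + a^2)]

lemma young_type (t l : ℝ) (ht : 0 ≤ t) (hl : 0 < l) :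
    t ^ ((3:ℝ)/2) ≤ 3/4 * l * t ^ 2 + 1 / (4 * l ^ 3) := by
  set s := Real.sqrt t with hs
  have hs0 : 0 ≤ s := Real.sqrt_nonneg t
  have hss : s ^ 2 = t := Real.sq_sqrt ht
  have hrpow : t ^ ((3:ℝ)/2) = s ^ 3 := by
    rw [← hss, ← Real.rpow_natCast s 2, ← Real.rpow_mul hs0, ← Real.rpow_natCast s 3]
    norm_num
  rw [hrpow, ← hss]
  rw [show (3:ℝ)/4*l*(s^2)^2 + 1/(4*l^3) = (3*l^4*(s^2)^2 + 1)/(4*l^3) by field_simp,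
    le_div_iff₀ (by positivity)]
  nlinarith [mul_nonneg (mul_nonneg hl.le hs0) (sq_nonneg (l*s-1)), sq_nonneg (l*s-1),
    sq_nonneg (l*s)]

lemma pointwise_bound (ε l x : ℝ) (hε : 0 < ε) (hε2 : ε ≤ 2) (hl : 0 < l) :
    |x| ^ ((3:ℝ)/2) ≤
      (1 + 1/(4*l^3)) + (3/4*l*ε + 1/(Real.sqrt 2 - 1)) * (x * Veps ε x) := by
  have hr1 : 1 < Real.sqrt 2 := sqrt2_gt_one
  have hw0 : 0 ≤ 1/(Real.sqrt 2 - 1) := div_nonneg zero_le_one (by linarith)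
  have hxV : 0 ≤ x * Veps ε x := Veps_nonneg_mul ε hε x
  have hl3 : 0 ≤ 1/(4*l^3) := by positivity
  have hexp : (3/4*l*ε + 1/(Real.sqrt 2 - 1)) * (x * Veps ε x)
      = (3/4*l*ε) * (x * Veps ε x) + (1/(Real.sqrt 2 - 1)) * (x * Veps ε x) := by ring
  have hlnn : 0 ≤ (3/4*l*ε) * (x * Veps ε x) := mul_nonneg (by positivity) hxV
  have hwnn : 0 ≤ (1/(Real.sqrt 2 - 1)) * (x * Veps ε x) := mul_nonneg hw0 hxV
  by_cases h1 : 1 < x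
  · have hV : Veps ε x = Real.sqrt (x + (ε/2)^2) - ε/2 := if_pos (by linarith)
    have hb := case_big ε x hε hε2 h1
    rw [← hV] at hb
    have habs : |x| = x := abs_of_pos (by linarith)
    rw [habs]
    have hw1 : (1/(Real.sqrt 2 - 1)) * (Real.sqrt 2 - 1) = 1 :=
      one_div_mul_cancel (by linarith)
    have hb2 := mul_le_mul_of_nonneg_left hb hw0
    have h3 : (1/(Real.sqrt 2 - 1)) * ((Real.sqrt 2 - 1) * x ^ ((3:ℝ)/2)) = x ^ ((3:ℝ)/2) := by
      rw [← mul_assoc, hw1, one_mul]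
    rw [h3] at hb2
    linarith
  · by_cases h0 : 0 ≤ x
    · have : |x| ^ ((3:ℝ)/2) ≤ 1 :=
        Real.rpow_le_one (abs_nonneg x) (by rw [abs_of_nonneg h0]; linarith) (by norm_num)
      linarith
    · push_neg at h0
      have hV : Veps ε x = x / ε := if_neg (by linarith)
      have hy := young_type |x| l (abs_nonneg x) hl
      rw [sq_abs] at hy
      have hxv : x * Veps ε x = x^2/ε := by rw [hV]; ring
      have he1 : (3/4*l*ε) * (x * Veps ε x) = 3/4*l*x^2 := by
        rw [hxv]; field_simp
      linarith

theorem stmt_15 {Ω : Type*} [MeasurableSpace Ω] (μ : Measure Ω) [IsFiniteMeasure μ]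
    (p : Ω → ℝ) (hp : Measurable p) (ε C : ℝ) (hε : 0 < ε) (hε2 : ε ≤ 2) (hC : 0 ≤ C)
    (hint1 : Integrable (fun ω => p ω * Veps ε (p ω)) μ)
    (hint2 : Integrable (fun ω => |p ω| ^ ((3 : ℝ) / 2)) μ)
    (hbound : ∫ ω, p ω * Veps ε (p ω) ∂μ ≤ C) :
    ∫ ω, |p ω| ^ ((3 : ℝ) / 2) ∂μ ≤
      (μ Set.univ).toReal + ((μ Set.univ).toReal * ε ^ 3) ^ ((1 : ℝ) / 4) * C ^ ((3 : ℝ) / 4)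
        + C / (Real.sqrt 2 - 1) := by
  set M := (μ Set.univ).toReal with hM
  have hM0 : 0 ≤ M := ENNReal.toReal_nonneg
  have hr1 : 1 < Real.sqrt 2 := sqrt2_gt_one
  have hIpV0 : 0 ≤ ∫ ω, p ω * Veps ε (p ω) ∂μ :=
    integral_nonneg fun ω => Veps_nonneg_mul ε hε (p ω)
  -- the key lambda-parametrized bound
  have lamBound : ∀ l : ℝ, 0 < l →
      ∫ ω, |p ω| ^ ((3 : ℝ) / 2) ∂μ ≤
        M + M/(4*l^3) + 3/4*l*ε*C + C/(Real.sqrt 2 - 1) := by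
    intro l hl
    set K := 3/4*l*ε + 1/(Real.sqrt 2 - 1) with hK
    have hK0 : 0 ≤ K := by
      have : 0 ≤ 1/(Real.sqrt 2 - 1) := div_nonneg zero_le_one (by linarith)
      have : 0 ≤ 3/4*l*ε := by positivity
      simp only [hK]; linarith
    have hgint : Integrable (fun ω => (1 + 1/(4*l^3)) + K * (p ω * Veps ε (p ω))) μ :=
      (integrable_const _).add (hint1.const_mul K)
    have hmono : ∫ ω, |p ω| ^ ((3 : ℝ) / 2) ∂μ ≤
        ∫ ω, ((1 + 1/(4*l^3)) + K * (p ω * Veps ε (p ω))) ∂μ :=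
      integral_mono hint2 hgint fun ω => pointwise_bound ε l (p ω) hε hε2 hl
    rw [integral_add (integrable_const _) (hint1.const_mul K), integral_const,
      integral_const_mul, smul_eq_mul] at hmono
    have h2 : K * ∫ ω, p ω * Veps ε (p ω) ∂μ ≤ K * C :=
      mul_le_mul_of_nonneg_left hbound hK0
    have h3 : K * C = 3/4*l*ε*C + C/(Real.sqrt 2 - 1) := by
      rw [hK]; field_simp
    have h4 : M * (1 + 1/(4*l^3)) = M + M/(4*l^3) := by ring
    calc ∫ ω, |p ω| ^ ((3 : ℝ) / 2) ∂μ
        ≤ M * (1 + 1/(4*l^3)) + K * ∫ ω, p ω * Veps ε (p ω) ∂μ := hmono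
      _ ≤ M * (1 + 1/(4*l^3)) + K * C := add_le_add_right h2 _
      _ = M + M/(4*l^3) + 3/4*l*ε*C + C/(Real.sqrt 2 - 1) := by rw [h3, h4]; ring
  by_cases hC0 : C = 0
  · subst hC0
    rw [Real.zero_rpow (by norm_num : (3:ℝ)/4 ≠ 0)]
    simp only [mul_zero, zero_div, add_zero]
    refine le_of_forall_pos_le_add fun δ hδ => ?_
    set l := max 1 (M/(4*δ)) with hldef
    have hl1 : (1:ℝ) ≤ l := le_max_left _ _
    have hl2 : M/(4*δ) ≤ l := le_max_right _ _
    have hl0 : 0 < l := by linarith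
    have hM4 : M ≤ l * (4*δ) := (div_le_iff₀ (by positivity)).mp hl2
    have hl3 : l ≤ l^3 := le_self_pow₀ hl1 (by norm_num)
    have hdiv : M/(4*l^3) ≤ δ := by
      rw [div_le_iff₀ (by positivity)]
      nlinarith
    have := lamBound l hl0
    simp only [mul_zero, zero_mul, zero_div, add_zero] at this
    linarith
  · have hCpos : 0 < C := lt_of_le_of_ne hC (Ne.symm hC0)
    by_cases hM00 : M = 0
    · rw [hM00]
      rw [zero_mul, Real.zero_rpow (by norm_num : (1:ℝ)/4 ≠ 0), zero_mul, zero_add, zero_add]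
      refine le_of_forall_pos_le_add fun δ hδ => ?_
      set l := δ/(ε*C) with hldef
      have hl0 : 0 < l := by positivity
      have := lamBound l hl0
      rw [hM00] at this
      have hle : 3/4*l*ε*C ≤ δ := by
        rw [hldef]
        rw [show 3/4*(δ/(ε*C))*ε*C = 3/4*δ by field_simp]
        linarith
      simp only [zero_div, zero_add, add_zero] at this
      linarith
    · have hMpos : 0 < M := lt_of_le_of_ne hM0 (Ne.symm hM00)
      set Q := M/(ε*C) with hQ
      have hQ0 : 0 < Q := by positivity
      set l := Q ^ ((1:ℝ)/4) with hldef
      have hl0 : 0 < l := Real.rpow_pos_of_pos hQ0 _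
      have hl4 : l ^ (4:ℕ) = Q := by
        rw [hldef, ← Real.rpow_natCast (Q ^ ((1:ℝ)/4)) 4, ← Real.rpow_mul hQ0.le]
        norm_num
      set R := (M * ε ^ 3) ^ ((1:ℝ)/4) * C ^ ((3:ℝ)/4) with hR
      have hR0 : 0 ≤ R := by
        apply mul_nonneg <;> exact Real.rpow_nonneg (by positivity) _
      -- key identity : M = R * l^3
      have hkey : M = R * l ^ 3 := by
        have h4a : ((M * ε^3) ^ ((1:ℝ)/4)) ^ (4:ℕ) = M * ε^3 := by
          rw [← Real.rpow_natCast ((M*ε^3) ^ ((1:ℝ)/4)) 4, ← Real.rpow_mul (by positivity)]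
          norm_num
        have h4b : (C ^ ((3:ℝ)/4)) ^ (4:ℕ) = C^3 := by
          rw [← Real.rpow_natCast (C ^ ((3:ℝ)/4)) 4, ← Real.rpow_mul hC,
            show ((3:ℝ)/4) * ((4:ℕ):ℝ) = ((3:ℕ):ℝ) by norm_num, Real.rpow_natCast]
        have hpow : (R * l^3) ^ (4:ℕ) = M ^ (4:ℕ) := by
          have hl12 : (l^3)^(4:ℕ) = Q^3 := by
            rw [show (l^3)^(4:ℕ) = (l^(4:ℕ))^3 by ring, hl4]
          rw [hR, mul_pow, mul_pow, h4a, h4b, hl12, hQ]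
          field_simp
        have hmono4 : StrictMonoOn (fun x : ℝ => x ^ (4:ℕ)) (Set.Ici 0) :=
          pow_left_strictMonoOn₀ (by norm_num)
        have := hmono4.injOn (Set.mem_Ici.mpr hM0)
          (Set.mem_Ici.mpr (mul_nonneg hR0 (by positivity))) hpow.symm
        exact this
      have := lamBound l hl0
      have heq : M/(4*l^3) + 3/4*l*ε*C = R := by
        have hl4' : l^4 = Q := hl4
        have hεC : l^4 * (ε*C) = M := by
          rw [hl4', hQ]; field_simp
        have hl3p : (0:ℝ) < l^3 := by positivity
        rw [div_add' _ _ _ (by positivity)]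
        rw [div_eq_iff (by positivity)]
        -- M + 3/4*l*ε*C*(4*l^3) = R*(4*l^3)
        nlinarith [hkey, hεC]
      calc ∫ ω, |p ω| ^ ((3 : ℝ) / 2) ∂μ
          ≤ M + M/(4*l^3) + 3/4*l*ε*C + C/(Real.sqrt 2 - 1) := this
        _ = M + R + C/(Real.sqrt 2 - 1) := by rw [← heq]; ring
        _ = M + (M * ε ^ 3) ^ ((1:ℝ)/4) * C ^ ((3:ℝ)/4) + C/(Real.sqrt 2 - 1) := by rw [hR]
end

section
/- Lower semicontinuity of convex integrands under weak L^q convergence: let (Ω, μ) be a σ-finite measure space, H : ℝ → ℝ convex and lower semicontinuous, g_n ⇀ g weakly in L^q(μ) (1 < q < ∞), and suppose H(g_n) ⇀ h weakly in L^r(μ) (1 ≤ r < ∞). Then H(g) ≤ h almost everywhere. -/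
open MeasureTheory Filter ENNReal

/-- A convex function on all of `ℝ` has a subgradient at every point. -/
lemma exists_subgradient_aux (H : ℝ → ℝ) (hconv : ConvexOn ℝ Set.univ H) (p : ℝ) :
    ∃ s : ℝ, ∀ x, H p + s * (x - p) ≤ H x := by
  set S := (fun y => (H y - H p) / (y - p)) '' Set.Iio p with hS
  have hne : S.Nonempty := ⟨_, ⟨p - 1, by simp, rfl⟩⟩
  have hbdd : BddAbove S := by
    refine ⟨(H (p + 1) - H p) / (p + 1 - p), ?_⟩
    rintro _ ⟨y, hy, rfl⟩
    exact hconv.secant_mono trivial trivial trivial (ne_of_lt hy) (by norm_num) (by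
      simp only [Set.mem_Iio] at hy; linarith)
  refine ⟨sSup S, fun x => ?_⟩
  rcases lt_trichotomy x p with hx | rfl | hx
  · have hmem : (H x - H p) / (x - p) ∈ S := ⟨x, hx, rfl⟩
    have hle : (H x - H p) / (x - p) ≤ sSup S := le_csSup hbdd hmem
    have hxp : x - p < 0 := by linarith
    have h1 : sSup S * (x - p) ≤ (H x - H p) / (x - p) * (x - p) :=
      mul_le_mul_of_nonpos_right hle hxp.le
    rw [div_mul_cancel₀ _ hxp.ne] at h1
    linarith
  · simp
  · have hub : ∀ z ∈ S, z ≤ (H x - H p) / (x - p) := by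
      rintro _ ⟨y, hy, rfl⟩
      simp only [Set.mem_Iio] at hy
      exact hconv.secant_mono trivial trivial trivial (ne_of_lt hy) (ne_of_gt hx) (by linarith)
    have hle : sSup S ≤ (H x - H p) / (x - p) := csSup_le hne hub
    have hxp : 0 < x - p := by linarith
    have h1 : sSup S * (x - p) ≤ (H x - H p) / (x - p) * (x - p) :=
      mul_le_mul_of_nonneg_right hle hxp.le
    rw [div_mul_cancel₀ _ hxp.ne'] at h1
    linarith

/-- If `c` dominates all the rational subtangent lines at a point `x`, it dominates `H x`. -/
lemma le_of_forall_subtangent_le (H : ℝ → ℝ) (hconv : ConvexOn ℝ Set.univ H) (s : ℚ → ℝ)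
    (hs : ∀ (p : ℚ) (x : ℝ), H p + s p * (x - p) ≤ H x) (x c : ℝ)
    (hc : ∀ p : ℚ, H p + s p * (x - p) ≤ c) : H x ≤ c := by
  have hcont : Continuous H := continuousOn_univ.mp (hconv.continuousOn isOpen_univ)
  by_contra hlt
  push_neg at hlt
  set ε := H x - c with hεdef
  have hε : 0 < ε := by simp [hεdef]; linarith
  obtain ⟨K, hK⟩ := (isCompact_Icc (a := x - 2) (b := x + 2)).exists_bound_of_continuousOn
    hcont.continuousOn
  have hK0 : 0 ≤ K := le_trans (norm_nonneg _) (hK x (by constructor <;> linarith))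
  obtain ⟨δ', hδ'0, hδ'⟩ := Metric.continuousAt_iff.mp hcont.continuousAt (ε := ε / 2)
    (by linarith)
  set δ := min 1 (min δ' (ε / (2 * (2 * K + 1)))) with hδdef
  have hδ0 : 0 < δ := by
    apply lt_min one_pos (lt_min hδ'0 _)
    positivity
  obtain ⟨p, hp1, hp2⟩ := exists_rat_btwn (show x - δ < x by linarith)
  have hpx : |x - (p : ℝ)| < δ := by rw [abs_of_pos (by linarith)]; linarith
  have hδ1 : δ ≤ 1 := min_le_left _ _
  have hδ2 : δ ≤ δ' := le_trans (min_le_right _ _) (min_le_left _ _)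
  have hδ3 : δ ≤ ε / (2 * (2 * K + 1)) := le_trans (min_le_right _ _) (min_le_right _ _)
  -- bound on the slope s p
  have hb1 : H (p : ℝ) + s p * 1 ≤ H ((p : ℝ) + 1) := by
    have := hs p ((p : ℝ) + 1); simpa using this
  have hb2 : H (p : ℝ) + s p * (-1) ≤ H ((p : ℝ) - 1) := by
    have := hs p ((p : ℝ) - 1)
    simpa [sub_sub, sub_eq_add_neg] using this
  have hmemK : ∀ y : ℝ, y ∈ Set.Icc (x - 2) (x + 2) → |H y| ≤ K := by
    intro y hy; simpa [Real.norm_eq_abs] using hK y hy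
  have hKp : |H (p : ℝ)| ≤ K := hmemK _ (by constructor <;> linarith)
  have hKp1 : |H ((p : ℝ) + 1)| ≤ K := hmemK _ (by constructor <;> linarith)
  have hKp2 : |H ((p : ℝ) - 1)| ≤ K := hmemK _ (by constructor <;> linarith)
  have hsub : |s p| ≤ 2 * K := by
    rw [abs_le]
    constructor
    · have := abs_le.mp hKp; have := abs_le.mp hKp2; linarith
    · have := abs_le.mp hKp; have := abs_le.mp hKp1; linarith
  -- continuity estimate
  have hHp : |H (p : ℝ) - H x| < ε / 2 := by
    have := hδ' (x := (p : ℝ)) (by rw [Real.dist_eq, abs_sub_comm]; exact lt_of_lt_of_le hpx hδ2)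
    rwa [Real.dist_eq] at this
  -- final estimate
  have hbig : |s p * (x - (p : ℝ))| < ε / 2 := by
    rw [abs_mul]
    calc |s p| * |x - (p : ℝ)| ≤ (2 * K) * δ := by
          apply mul_le_mul hsub hpx.le (abs_nonneg _) (by linarith)
      _ ≤ (2 * K) * (ε / (2 * (2 * K + 1))) := by
          apply mul_le_mul_of_nonneg_left hδ3 (by linarith)
      _ < ε / 2 := by
          have h2K : (0:ℝ) < 2 * (2 * K + 1) := by linarith
          rw [mul_div_assoc', div_lt_div_iff₀ h2K (by norm_num : (0:ℝ) < 2)]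
          nlinarith
  have hcp := hc p
  have h1 := abs_le.mp hHp.le
  have h2 := abs_le.mp hbig.le
  have hx' : H (p : ℝ) + s p * (x - (p : ℝ)) > H x - ε := by
    have : s p * (x - (p : ℝ)) ≥ -(ε / 2) := by linarith [neg_abs_le (s p * (x - (p:ℝ)))]
    nlinarith [neg_abs_le (H (p : ℝ) - H x), neg_abs_le (s p * (x - (p:ℝ))), hHp, hbig]
  linarith

theorem stmt_17 {Ω : Type*} [MeasurableSpace Ω] (μ : Measure Ω) [SigmaFinite μ]
    (H : ℝ → ℝ) (hconv : ConvexOn ℝ Set.univ H) (hlsc : LowerSemicontinuous H)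
    (q r q' r' : ℝ≥0∞) (hq : 1 < q) (hq' : q < ⊤) (hr : 1 ≤ r) (hr' : r < ⊤)
    (hqq' : q⁻¹ + q'⁻¹ = 1) (hrr' : r⁻¹ + r'⁻¹ = 1)
    (gn : ℕ → Ω → ℝ) (g : Ω → ℝ) (h : Ω → ℝ)
    (hgn : ∀ n, MemLp (gn n) q μ) (hg : MemLp g q μ)
    (hHgn : ∀ n, MemLp (fun ω => H (gn n ω)) r μ) (hh : MemLp h r μ)
    (hweakg : ∀ φ : Ω → ℝ, MemLp φ q' μ →
      Tendsto (fun n => ∫ ω, gn n ω * φ ω ∂μ) atTop (nhds (∫ ω, g ω * φ ω ∂μ)))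
    (hweakH : ∀ φ : Ω → ℝ, MemLp φ r' μ →
      Tendsto (fun n => ∫ ω, H (gn n ω) * φ ω ∂μ) atTop (nhds (∫ ω, h ω * φ ω ∂μ))) :
    ∀ᵐ ω ∂μ, H (g ω) ≤ h ω := by
  -- integrability of ℒᵖ functions on finite-measure sets
  have hint : ∀ (f : Ω → ℝ) (p : ℝ≥0∞), 1 ≤ p → MemLp f p μ →
      ∀ t : Set Ω, μ t < ∞ → IntegrableOn f t μ := by
    intro f p hp hf t hμt
    haveI : IsFiniteMeasure (μ.restrict t) :=
      ⟨by rw [Measure.restrict_apply_univ]; exact hμt⟩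
    exact (hf.restrict t).integrable hp
  -- the key weak-convergence step for a fixed affine minorant
  have step : ∀ a b : ℝ, (∀ x, a * x + b ≤ H x) → ∀ᵐ ω ∂μ, a * g ω + b ≤ h ω := by
    intro a b hab
    have main : ∀ᵐ ω ∂μ, 0 ≤ h ω - (a * g ω + b) := by
      apply ae_nonneg_of_forall_setIntegral_nonneg_of_sigmaFinite
      · intro t ht hμt
        exact (hint h r hr hh t hμt).sub
          (((hint g q hq.le hg t hμt).const_mul a).add (integrableOn_const hμt.ne))
      · intro t ht hμt
        set φ : Ω → ℝ := t.indicator (fun _ => (1 : ℝ)) with hφdef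
        have hφmem : ∀ p : ℝ≥0∞, MemLp φ p μ := fun p =>
          memLp_indicator_const p ht 1 (Or.inr hμt.ne)
        have hrw : ∀ f : Ω → ℝ, (∫ ω, f ω * φ ω ∂μ) = ∫ ω in t, f ω ∂μ := by
          intro f
          rw [← integral_indicator ht]
          congr 1
          funext ω
          by_cases hω : ω ∈ t <;> simp [hφdef, Set.indicator_of_mem,
            Set.indicator_of_notMem, hω]
        have h1 := hweakg φ (hφmem q')
        have h2 := hweakH φ (hφmem r')
        simp only [hrw] at h1 h2
        have hgint : ∀ n, IntegrableOn (gn n) t μ := fun n => hint (gn n) q hq.le (hgn n) t hμt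
        have haff : ∀ n, IntegrableOn (fun ω => a * gn n ω + b) t μ := fun n =>
          ((hgint n).const_mul a).add (integrableOn_const hμt.ne)
        have hmono : ∀ n, (∫ ω in t, (a * gn n ω + b) ∂μ) ≤ ∫ ω in t, H (gn n ω) ∂μ := by
          intro n
          exact integral_mono (haff n) (hint _ r hr (hHgn n) t hμt) (fun ω => hab (gn n ω))
        have hLa : ∀ n, (∫ ω in t, (a * gn n ω + b) ∂μ)
            = a * (∫ ω in t, gn n ω ∂μ) + (μ t).toReal * b := by
          intro n
          rw [integral_add ((hgint n).const_mul a) (integrableOn_const hμt.ne),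
            integral_const_mul, setIntegral_const, smul_eq_mul, Measure.real]
        have hlim1 : Tendsto (fun n => ∫ ω in t, (a * gn n ω + b) ∂μ) atTop
            (nhds (a * (∫ ω in t, g ω ∂μ) + (μ t).toReal * b)) := by
          simp only [hLa]
          exact (h1.const_mul a).add_const _
        have hle : a * (∫ ω in t, g ω ∂μ) + (μ t).toReal * b ≤ ∫ ω in t, h ω ∂μ :=
          le_of_tendsto_of_tendsto' hlim1 h2 hmono
        have hLg : (∫ ω in t, (a * g ω + b) ∂μ)
            = a * (∫ ω in t, g ω ∂μ) + (μ t).toReal * b := by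
          rw [integral_add ((hint g q hq.le hg t hμt).const_mul a)
            (integrableOn_const hμt.ne), integral_const_mul, setIntegral_const,
            smul_eq_mul, Measure.real]
        have hi2 : IntegrableOn (fun ω => a * g ω + b) t μ :=
          ((hint g q hq.le hg t hμt).const_mul a).add (integrableOn_const hμt.ne)
        rw [integral_sub (hint h r hr hh t hμt) hi2]
        have : (∫ ω in t, (a * g ω + b) ∂μ) ≤ ∫ ω in t, h ω ∂μ := by rw [hLg]; exact hle
        linarith
    filter_upwards [main] with ω hω
    linarith
  -- choose subgradients at all rational points
  choose s hs using fun p : ℚ => exists_subgradient_aux H hconv (p : ℝ)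
  have hae : ∀ᵐ ω ∂μ, ∀ p : ℚ, H (p : ℝ) + s p * (g ω - (p : ℝ)) ≤ h ω := by
    rw [ae_all_iff]
    intro p
    have haff : ∀ x, s p * x + (H (p : ℝ) - s p * (p : ℝ)) ≤ H x := by
      intro x
      have := hs p x
      linarith [hs p x, (by ring : H (p:ℝ) + s p * (x - (p:ℝ))
        = s p * x + (H (p:ℝ) - s p * (p:ℝ)))]
    filter_upwards [step (s p) (H (p : ℝ) - s p * (p : ℝ)) haff] with ω hω
    linarith [hω, (by ring : H (p:ℝ) + s p * (g ω - (p:ℝ))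
      = s p * g ω + (H (p:ℝ) - s p * (p:ℝ)))]
  filter_upwards [hae] with ω hω
  exact le_of_forall_subtangent_le H hconv s (fun p x => hs p x) (g ω) (h ω) (fun p => hω p)
end
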